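/- Let F be a field with char(F) ≠ 2, and let A₃ be the algebra on F³ with multiplication e₁·e₂ = e₂, e₁·e₃ = e₂, e₂·e₃ = e₃ (other basis products determined by anti-commutativity). Then the derivations of A₃ are exactly the scalar multiples of the linear map D₀ with D₀(e₁) = -e₁ + e₂ - e₃, D₀(e₂) = e₃, D₀(e₃) = e₃, and the automorphisms of A₃ are exactly the linear maps g_t, for nonzero t ∈ F, defined by g_t(e₁) = (1/t)e₁ + (1 - 1/t)e₂ + (1/t - 1)e₃, g_t(e₂) = e₂ + (t-1)e₃, g_t(e₃) = t e₃. -/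

import Mathlib

def mulA3 {F : Type*} [Field F] (x y : Fin 3 → F) : Fin 3 → F :=
  ![0,
    (x 0 * y 1 - x 1 * y 0) + (x 0 * y 2 - x 2 * y 0),
    (x 1 * y 2 - x 2 * y 1)]

theorem der_aut_A3
    (F : Type*) [Field F] (hchar : ringChar F ≠ 2) :
    (∀ D : (Fin 3 → F) →ₗ[F] (Fin 3 → F),
      (∀ x y : Fin 3 → F, D (mulA3 x y) = mulA3 (D x) y + mulA3 x (D y)) ↔
        ∃ a : F,
          D ![1, 0, 0] = a • ![-1, 1, -1] ∧
          D ![0, 1, 0] = a • ![0, 0, 1] ∧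
          D ![0, 0, 1] = a • ![0, 0, 1]) ∧
    (∀ g : (Fin 3 → F) ≃ₗ[F] (Fin 3 → F),
      (∀ x y : Fin 3 → F, g (mulA3 x y) = mulA3 (g x) (g y)) ↔
        ∃ t : F, t ≠ 0 ∧
          g ![1, 0, 0] = ![1 / t, 1 - 1 / t, 1 / t - 1] ∧
          g ![0, 1, 0] = ![0, 1, t - 1] ∧
          g ![0, 0, 1] = t • ![0, 0, 1]) := by
  have decomp : ∀ x : Fin 3 → F, x = x 0 • ![(1:F),0,0] + x 1 • ![0,1,0] + x 2 • ![0,0,1] := by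
    intro x; funext i; fin_cases i <;> simp
  have m12 : mulA3 (![1,0,0] : Fin 3 → F) ![0,1,0] = ![0,1,0] := by
    funext i; fin_cases i <;> simp [mulA3]
  have m13 : mulA3 (![1,0,0] : Fin 3 → F) ![0,0,1] = ![0,1,0] := by
    funext i; fin_cases i <;> simp [mulA3]
  have m23 : mulA3 (![0,1,0] : Fin 3 → F) ![0,0,1] = ![0,0,1] := by
    funext i; fin_cases i <;> simp [mulA3]
  constructor
  · -- derivations
    intro D
    constructor
    · intro hD
      have h12 := hD ![1,0,0] ![0,1,0]
      have h13 := hD ![1,0,0] ![0,0,1]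
      have h23 := hD ![0,1,0] ![0,0,1]
      rw [m12] at h12
      rw [m13] at h13
      rw [m23] at h23
      have c1 := congrFun h12 0
      have c2 := congrFun h12 1
      have c3 := congrFun h12 2
      have d1 := congrFun h13 0
      have d2 := congrFun h13 1
      have d3 := congrFun h13 2
      have f1 := congrFun h23 0
      have f2 := congrFun h23 1
      have f3 := congrFun h23 2
      simp [mulA3] at c1 c2 c3 d1 d2 d3 f1 f2 f3
      refine ⟨-(D ![1,0,0] 0), ?_, ?_, ?_⟩ <;> funext i <;> fin_cases i <;> simp <;>
        first
          | linear_combination -c2 - d3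
          | linear_combination c2 + c3
          | linear_combination c1
          | linear_combination f3
          | linear_combination -c2
          | linear_combination f1
          | linear_combination f2 + c1 - f1
          | linear_combination -d2 + f3 - f2 - c1 + f1
    · rintro ⟨a, h1, h2, h3⟩ x y
      have hDx : ∀ z : Fin 3 → F, ∀ i : Fin 3,
          D z i = z 0 * (a • ![(-1:F),1,-1]) i + z 1 * (a • ![(0:F),0,1]) i
            + z 2 * (a • ![(0:F),0,1]) i := by
        intro z i
        have h := congrArg D (decomp z)
        rw [map_add, map_add, map_smul, map_smul, map_smul, h1, h2, h3] at h
        rw [h]; fin_cases i <;> simp <;> ring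
      funext i
      fin_cases i <;> simp [hDx, mulA3] <;> ring
  · -- automorphisms
    intro g
    constructor
    · intro hg
      have h12 := hg ![1,0,0] ![0,1,0]
      have h13 := hg ![1,0,0] ![0,0,1]
      have h23 := hg ![0,1,0] ![0,0,1]
      rw [m12] at h12
      rw [m13] at h13
      rw [m23] at h23
      have c1 := congrFun h12 0
      have c2 := congrFun h12 1
      have c3 := congrFun h12 2
      have d1 := congrFun h13 0
      have d2 := congrFun h13 1
      have d3 := congrFun h13 2
      have f1 := congrFun h23 0
      have f2 := congrFun h23 1
      have f3 := congrFun h23 2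
      simp [mulA3] at c1 c2 c3 d1 d2 d3 f1 f2 f3
      set a := g ![1,0,0] 0 with ha0
      set b := g ![1,0,0] 1 with hb0
      set c := g ![1,0,0] 2 with hc0
      set p := g ![0,1,0] 0 with hp0
      set q := g ![0,1,0] 1 with hq0
      set r := g ![0,1,0] 2 with hr0
      set u := g ![0,0,1] 0 with hu0
      set v := g ![0,0,1] 1 with hv0
      set w := g ![0,0,1] 2 with hw0
      have hp : p = 0 := c1
      have hu : u = 0 := f1
      have hv : v = 0 := by linear_combination f2 + (v + w) * c1 - (q + r) * f1
      have hw : w ≠ 0 := by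
        intro hw0'
        have hz : g ![0,0,1] = 0 := by
          funext i; fin_cases i
          · simpa using hu
          · simpa using hv
          · simpa using hw0'
        have := (LinearEquiv.map_eq_zero_iff g).mp hz
        have := congrFun this 2
        simp at this
      have hq : q = 1 := by
        have hqw : (q - 1) * w = 0 := by linear_combination -f3 + r * hv
        rcases mul_eq_zero.mp hqw with h | h
        · linear_combination h
        · exact absurd h hw
      have ha : a * w = 1 := by linear_combination -d2 - a * hv + (b + c) * hu + hq
      have h1r : a * (1 + r) = 1 := by linear_combination -c2 + (1 - a) * hq + (b + c) * hp
      have hr : r = w - 1 := by linear_combination w * h1r - (1 + r) * ha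
      have hb : b * w = w - 1 := by linear_combination -d3 + c * hv + hr
      have hcw : c * w = 1 - w := by linear_combination w * c3 - w * c * hq + r * hb - hr
      refine ⟨w, hw, ?_, ?_, ?_⟩ <;> funext i <;> fin_cases i <;> simp
      · field_simp; linear_combination ha
      · field_simp; linear_combination hb
      · field_simp; linear_combination hcw
      · exact hp
      · exact hq
      · exact hr
      · exact hu
      · exact hv
      · exact hw0.symm
    · rintro ⟨t, ht, h1, h2, h3⟩ x y
      have hgx : ∀ z : Fin 3 → F, ∀ i : Fin 3,
          g z i = z 0 * (![1/t, 1-1/t, 1/t-1] : Fin 3 → F) i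
            + z 1 * (![(0:F), 1, t-1] : Fin 3 → F) i
            + z 2 * (t • ![(0:F),0,1]) i := by
        intro z i
        have h := congrArg g (decomp z)
        rw [map_add, map_add, map_smul, map_smul, map_smul, h1, h2, h3] at h
        rw [h]; fin_cases i <;> simp <;> ring
      funext i
      fin_cases i <;> simp [hgx, mulA3] <;> field_simp <;> ring
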